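/- Let k₁ < k₂ be coprime positive integers and m₁, m₂ positive integers with m₁ = k₂/(k₂ - k₁), m₂ = k₁/(k₂ - k₁), and k₁σ(m₁) = k₂σ(m₂). Then k₂ = k₁ + 1, m₁ = k₂, m₂ = k₁, k₁ divides σ(k₁), and k₁ + 1 divides σ(k₁ + 1). -/
import Mathlib


theorem stmt_7 (k₁ k₂ m₁ m₂ : ℕ) (hk₁ : 0 < k₁) (hlt : k₁ < k₂)
    (hcop : Nat.Coprime k₁ k₂) (hm₁ : 0 < m₁) (hm₂ : 0 < m₂)
    (h1 : m₁ * (k₂ - k₁) = k₂) (h2 : m₂ * (k₂ - k₁) = k₁)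
    (hσ : k₁ * ArithmeticFunction.sigma 1 m₁ = k₂ * ArithmeticFunction.sigma 1 m₂) :
    k₂ = k₁ + 1 ∧ m₁ = k₂ ∧ m₂ = k₁ ∧
      k₁ ∣ ArithmeticFunction.sigma 1 k₁ ∧ (k₁ + 1) ∣ ArithmeticFunction.sigma 1 (k₁ + 1) := by
  have hd1 : k₂ - k₁ ∣ k₁ := ⟨m₂, h2.symm.trans (Nat.mul_comm _ _)⟩
  have hd2 : k₂ - k₁ ∣ k₂ := ⟨m₁, h1.symm.trans (Nat.mul_comm _ _)⟩
  have hd : k₂ - k₁ = 1 := Nat.eq_one_of_dvd_coprimes hcop hd1 hd2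
  rw [hd, mul_one] at h1 h2
  have hk2 : k₂ = k₁ + 1 := by omega
  subst hk2; subst h1; rw [h2] at hσ
  have hdvd1 : k₁ ∣ ArithmeticFunction.sigma 1 k₁ :=
    (Nat.Coprime.dvd_of_dvd_mul_left hcop ⟨_, hσ.symm⟩)
  have hdvd2 : (k₁ + 1) ∣ ArithmeticFunction.sigma 1 (k₁ + 1) :=
    (Nat.Coprime.dvd_of_dvd_mul_left hcop.symm ⟨_, hσ⟩)
  exact ⟨rfl, rfl, h2, hdvd1, hdvd2⟩
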